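/- Fix integer K ≥ 2, arm means 1 > θ_1 > θ_2 > … > θ_K > 0, cost c > 0 and ε ∈ [0,1/2). Then every static policy u (i.e., every u = (k) and every u = (k,ℓ,m) with k,ℓ,m ∈ {1,…,K}) satisfies μ(u) ≤ max( θ_1 , μ((1,2)) ), where μ((1,2)) = −c + (1−ε)θ_1 + p0(θ_1)θ_2. That is, the optimal static policy is either (1) (play arm 1 without measuring) or (1,2) (measure arm 1, play arm 1 if the measurement is 1 and arm 2 otherwise). -/
import Mathlib


noncomputable section

/-- `p0 ε x = ε x + (1−ε)(1−x)`: probability that the ε-noisy measurement of a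
Bernoulli(x) arm returns 0. -/
def p0 (ε x : ℝ) : ℝ := ε * x + (1 - ε) * (1 - x)

/-- A static policy: either play arm `k` directly, or measure arm `k` and play
arm `l` if the measurement is 1 and arm `m` if it is 0. -/
inductive Policy where
  | play (k : ℕ)
  | meas (k l m : ℕ)
deriving DecidableEq

/-- Mean reward `μ(u)` of a static policy `u`, with arm means `θ`, noise level `ε`,
and measurement cost `c`. -/
def reward (θ : ℕ → ℝ) (ε c : ℝ) : Policy → ℝ
  | .play k => θ k
  | .meas k l m =>
      -c + (if l = k then (1 - ε) * θ k else (1 - p0 ε (θ k)) * θ l)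
         + (if m = k then ε * θ k else p0 ε (θ k) * θ m)

/-- A static policy is valid for `K` arms if all the arms it mentions lie in `{1,…,K}`. -/
def validPolicy (K : ℕ) : Policy → Prop
  | .play k => 1 ≤ k ∧ k ≤ K
  | .meas k l m => (1 ≤ k ∧ k ≤ K) ∧ (1 ≤ l ∧ l ≤ K) ∧ (1 ≤ m ∧ m ≤ K)

/-- Fix `K ≥ 2`, arm means `1 > θ_1 > … > θ_K > 0`, cost `c > 0` and
`ε ∈ [0,1/2)`. Then every static policy `u` satisfies `μ(u) ≤ max(θ_1, μ((1,2)))`, where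
`μ((1,2)) = −c + (1−ε)θ_1 + p0(θ_1)θ_2`: the optimal static policy is either `(1)` or
`(1,2)`. -/
theorem stmt2 (K : ℕ) (hK : 2 ≤ K) (θ : ℕ → ℝ)
    (h1 : θ 1 < 1) (hKpos : 0 < θ K)
    (hmono : ∀ i, 1 ≤ i → i < K → θ (i + 1) < θ i)
    (c ε : ℝ) (hc : 0 < c) (hε0 : 0 ≤ ε) (hε : ε < 1 / 2) :
    ∀ u : Policy, validPolicy K u →
      reward θ ε c u
        ≤ max (θ 1) (-c + (1 - ε) * θ 1 + p0 ε (θ 1) * θ 2) := by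
  -- monotonicity on the range [1, K]
  have hmono' : ∀ j, j ≤ K → ∀ i, 1 ≤ i → i ≤ j → θ j ≤ θ i := by
    intro j
    induction j with
    | zero => intro _ i hi hij; omega
    | succ n ih =>
      intro hjK i hi hij
      rcases Nat.lt_or_ge i (n + 1) with h | h
      · have hn1 : 1 ≤ n := by omega
        have h2 := ih (by omega) i hi (by omega)
        have hstep : θ (n + 1) < θ n := hmono n hn1 (by omega)
        linarith
      · have : i = n + 1 := by omega
        simp [this]
  have hpos : ∀ i, 1 ≤ i → i ≤ K → 0 < θ i := by
    intro i h1i h2i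
    exact lt_of_lt_of_le hKpos (hmono' K le_rfl i h1i h2i)
  have hle1 : ∀ i, 1 ≤ i → i ≤ K → θ i ≤ θ 1 := by
    intro i h1i h2i
    exact hmono' i h2i 1 le_rfl h1i
  have hle2 : ∀ i, 2 ≤ i → i ≤ K → θ i ≤ θ 2 := by
    intro i h1i h2i
    exact hmono' i h2i 2 (by norm_num) h1i
  have h1pos : 0 < θ 1 := hpos 1 le_rfl (by omega)
  have h2pos : 0 < θ 2 := hpos 2 (by norm_num) hK
  have h21 : θ 2 ≤ θ 1 := hle1 2 (by norm_num) hK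
  -- basic p0 facts
  have hp0nn : ∀ x : ℝ, 0 ≤ x → x ≤ 1 → 0 ≤ p0 ε x := by
    intro x hx hx1; unfold p0; nlinarith
  have hp0ge : ∀ x : ℝ, 0 ≤ x → x ≤ 1 → ε ≤ p0 ε x := by
    intro x hx hx1; unfold p0; nlinarith
  have hp1le : ∀ x : ℝ, 0 ≤ x → x ≤ 1 → 1 - p0 ε x ≤ 1 - ε := by
    intro x hx hx1; have := hp0ge x hx hx1; linarith
  have hp1nn : ∀ x : ℝ, 0 ≤ x → x ≤ 1 → 0 ≤ 1 - p0 ε x := by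
    intro x hx hx1; unfold p0; nlinarith
  intro u hu
  cases u with
  | play k =>
    obtain ⟨hk1, hkK⟩ := hu
    exact le_trans (hle1 k hk1 hkK) (le_max_left _ _)
  | meas k l m =>
    obtain ⟨⟨hk1, hkK⟩, ⟨hl1, hlK⟩, ⟨hm1, hmK⟩⟩ := hu
    have hθk0 : 0 ≤ θ k := le_of_lt (hpos k hk1 hkK)
    have hθk1 : θ k ≤ 1 := le_of_lt (lt_of_le_of_lt (hle1 k hk1 hkK) h1)
    have hθkle : θ k ≤ θ 1 := hle1 k hk1 hkK
    have hθl0 : 0 ≤ θ l := le_of_lt (hpos l hl1 hlK)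
    have hθlle : θ l ≤ θ 1 := hle1 l hl1 hlK
    have hθm0 : 0 ≤ θ m := le_of_lt (hpos m hm1 hmK)
    have hθmle : θ m ≤ θ 1 := hle1 m hm1 hmK
    have hAle : (if l = k then (1 - ε) * θ k else (1 - p0 ε (θ k)) * θ l)
        ≤ (1 - ε) * θ 1 := by
      split
      · nlinarith
      · have := hp1le (θ k) hθk0 hθk1
        have := hp1nn (θ k) hθk0 hθk1
        nlinarith
    simp only [reward]
    by_cases hmk : m = k
    · -- m = k : reward ≤ θ 1
      refine le_trans ?_ (le_max_left _ _)
      rw [if_pos hmk]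
      nlinarith [mul_nonneg hε0 (sub_nonneg.2 hθkle), hAle]
    · rw [if_neg hmk]
      by_cases hk : k = 1
      · -- k = 1, m ≥ 2
        refine le_trans ?_ (le_max_right _ _)
        have hm2 : 2 ≤ m := by omega
        have hθm2 : θ m ≤ θ 2 := hle2 m hm2 hmK
        subst hk
        have hp0 : 0 ≤ p0 ε (θ 1) := hp0nn (θ 1) hθk0 hθk1
        have := mul_le_mul_of_nonneg_left hθm2 hp0
        linarith
      · have hk2 : 2 ≤ k := by omega
        have hθk2 : θ k ≤ θ 2 := hle2 k hk2 hkK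
        have hp0k : 0 ≤ p0 ε (θ k) := hp0nn (θ k) hθk0 hθk1
        have hp01 : 0 ≤ p0 ε (θ 1) := hp0nn (θ 1) (le_of_lt h1pos) (le_of_lt h1)
        by_cases hlk : l = k
        · -- reward ≤ μ((1,2))
          refine le_trans ?_ (le_max_right _ _)
          rw [if_pos hlk]
          -- key identity: ((1-ε)θ1 + p0(θ1)θ2) - ((1-ε)θk + p0(θk)θ1) = p0(θ1)(θ2-θk)
          have key : (1 - ε) * θ 1 + p0 ε (θ 1) * θ 2
              - ((1 - ε) * θ k + p0 ε (θ k) * θ 1) = p0 ε (θ 1) * (θ 2 - θ k) := by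
            unfold p0; ring
          nlinarith [mul_nonneg hp01 (sub_nonneg.2 hθk2),
            mul_nonneg hp0k (sub_nonneg.2 hθmle)]
        · -- reward ≤ θ 1
          refine le_trans ?_ (le_max_left _ _)
          rw [if_neg hlk]
          have hp1k : 0 ≤ 1 - p0 ε (θ k) := hp1nn (θ k) hθk0 hθk1
          nlinarith [mul_nonneg hp1k (sub_nonneg.2 hθlle),
            mul_nonneg hp0k (sub_nonneg.2 hθmle)]
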